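/- Let X be a Polish space, A ⊆ X a set, G a graph (irreflexive symmetric relation) on X, and suppose there is a Baire measurable function φ : 2^ℕ → X such that φ is meager-to-one (preimages of singletons are meager), the set φ⁻¹(A) is comeager in 2^ℕ, and the set (φ × φ)⁻¹(G) is meager in 2^ℕ × 2^ℕ. Then there is a continuous injection π : 2^ℕ → A whose image is G-independent (i.e., no two points of the image are G-related). -/

import Mathlib

open Set

namespace Statement0Aux

abbrev Cantor := ℕ → Bool

/-- The cylinder of a finite binary string. -/
def cyl (s : List Bool) : Set Cantor :=
  {x | ∀ i (h : i < s.length), x i = s[i]}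

/-- first `n` bits of `x` as a list -/
def listOf (x : Cantor) (n : ℕ) : List Bool := (List.range n).map x

@[simp] lemma listOf_length (x : Cantor) (n : ℕ) : (listOf x n).length = n := by
  simp [listOf]

lemma listOf_getElem (x : Cantor) {n i : ℕ} (h : i < (listOf x n).length) :
    (listOf x n)[i] = x i := by
  simp [listOf] at h ⊢

lemma mem_cyl_listOf (x : Cantor) (n : ℕ) : x ∈ cyl (listOf x n) := by
  intro i h
  rw [listOf_getElem]

lemma cyl_anti {s t : List Bool} (h : s <+: t) : cyl t ⊆ cyl s := by
  intro x hx i hi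
  have hi' : i < t.length := lt_of_lt_of_le hi h.length_le
  rw [hx i hi', h.getElem hi]

lemma listOf_prefix (x : Cantor) {n m : ℕ} (h : n ≤ m) : listOf x n <+: listOf x m := by
  have : listOf x n = (listOf x m).take n := by
    rw [listOf, listOf, ← List.map_take, List.take_range, Nat.min_eq_left h]
  rw [this]
  exact List.take_prefix n _

lemma prefix_listOf_of_mem_cyl {s : List Bool} {x : Cantor} (hx : x ∈ cyl s)
    {m : ℕ} (hm : s.length ≤ m) : s <+: listOf x m := by
  have h1 : s = listOf x s.length := by
    apply List.ext_getElem (by simp)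
    intro i h1 h2
    rw [listOf_getElem, hx i h1]
  rw [h1]
  exact listOf_prefix x hm

lemma isOpen_cyl (s : List Bool) : IsOpen (cyl s) := by
  have : cyl s = ⋂ (i : Fin s.length), (fun x : Cantor => x i) ⁻¹' {s[(i:ℕ)]} := by
    ext x
    simp only [mem_iInter, mem_preimage, mem_singleton_iff]
    exact ⟨fun h i => h i i.2, fun h i hi => h ⟨i, hi⟩⟩
  rw [this]
  exact isOpen_iInter_of_finite fun i => (continuous_apply (i:ℕ)).isOpen_preimage _ (isOpen_discrete _)

lemma cyl_nonempty (s : List Bool) : (cyl s).Nonempty := by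
  refine ⟨fun i => s.getD i false, fun i h => ?_⟩
  exact List.getD_eq_getElem s false h

/-- basis property: any open set containing x contains a cylinder of x -/
lemma exists_cyl_subset {U : Set Cantor} (hU : IsOpen U) {x : Cantor} (hx : x ∈ U) :
    ∃ n, cyl (listOf x n) ⊆ U := by
  rcases isOpen_pi_iff.1 hU x hx with ⟨I, u, hI, hsub⟩
  rcases I.bddAbove with ⟨N, hN⟩
  refine ⟨N + 1, fun y hy => hsub ?_⟩
  intro i hi
  have hiN : i < N + 1 := Nat.lt_succ_of_le (hN hi)
  have := hy i (by simpa using hiN)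
  rw [listOf_getElem] at this
  rw [this]
  exact (hI i hi).2

lemma cyl_disjoint {s t : List Bool} {i : ℕ} (hs : i < s.length) (ht : i < t.length)
    (h : s[i] ≠ t[i]) : Disjoint (cyl s) (cyl t) := by
  rw [Set.disjoint_left]
  intro x hxs hxt
  exact h ((hxs i hs).symm.trans (hxt i ht))

/-- a set determined by the first n coordinates is open -/
lemma isOpen_of_determined {S : Set Cantor} {n : ℕ}
    (h : ∀ x y : Cantor, (∀ i < n, x i = y i) → x ∈ S → y ∈ S) : IsOpen S := by
  have : S = ⋃ x : S, cyl (listOf (x : Cantor) n) := by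
    ext y
    simp only [mem_iUnion]
    constructor
    · intro hy; exact ⟨⟨y, hy⟩, mem_cyl_listOf y n⟩
    · rintro ⟨⟨x, hx⟩, hy⟩
      refine h x y (fun i hi => ?_) hx
      have := hy i (by simpa using hi)
      rw [listOf_getElem] at this; exact this.symm
  rw [this]
  exact isOpen_iUnion fun x => isOpen_cyl _


/-- refine a string into a dense open set -/
lemma refine_into {D : Set Cantor} (hDo : IsOpen D) (hDd : Dense D) (s : List Bool) :
    ∃ t, s <+: t ∧ cyl t ⊆ D := by
  rcases hDd.exists_mem_open (isOpen_cyl s) (cyl_nonempty s) with ⟨x, hxD, hxs⟩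
  rcases exists_cyl_subset hDo hxD with ⟨n, hn⟩
  refine ⟨listOf x (max n s.length), prefix_listOf_of_mem_cyl hxs (le_max_right _ _), ?_⟩
  exact (cyl_anti (listOf_prefix x (le_max_left _ _))).trans hn

/-- refine a pair of strings so that the product cylinder is in a dense open set of the square -/
lemma refine_pair {W : Set (Cantor × Cantor)} (hWo : IsOpen W) (hWd : Dense W)
    (s t : List Bool) :
    ∃ a b, s <+: a ∧ t <+: b ∧ cyl a ×ˢ cyl b ⊆ W := by
  have hne : (cyl s ×ˢ cyl t).Nonempty := (cyl_nonempty s).prod (cyl_nonempty t)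
  have hop : IsOpen (cyl s ×ˢ cyl t) := (isOpen_cyl s).prod (isOpen_cyl t)
  rcases hWd.exists_mem_open hop hne with ⟨p, hpW, hps⟩
  rcases isOpen_prod_iff.1 hWo p.1 p.2 hpW with ⟨u, v, hu, hv, hpu, hpv, huv⟩
  rcases exists_cyl_subset hu hpu with ⟨n, hn⟩
  rcases exists_cyl_subset hv hpv with ⟨m, hm⟩
  have hps1 : p.1 ∈ cyl s := hps.1
  have hps2 : p.2 ∈ cyl t := hps.2
  refine ⟨listOf p.1 (max n s.length), listOf p.2 (max m t.length),
    prefix_listOf_of_mem_cyl hps1 (le_max_right _ _),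
    prefix_listOf_of_mem_cyl hps2 (le_max_right _ _), ?_⟩
  refine Subset.trans (prod_mono ?_ ?_) huv
  · exact (cyl_anti (listOf_prefix p.1 (le_max_left _ _))).trans hn
  · exact (cyl_anti (listOf_prefix p.2 (le_max_left _ _))).trans hm

/-- refine finitely many strings (indexed by ι, along a list of pairs) so that all product
cylinders of listed distinct pairs land in a dense open subset of the square. -/
lemma refine_pairs {ι : Type*} [DecidableEq ι] {W : Set (Cantor × Cantor)}
    (hWo : IsOpen W) (hWd : Dense W) :
    ∀ (L : List (ι × ι)) (u : ι → List Bool), ∃ v : ι → List Bool,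
      (∀ i, u i <+: v i) ∧ ∀ p ∈ L, p.1 ≠ p.2 → cyl (v p.1) ×ˢ cyl (v p.2) ⊆ W := by
  intro L
  induction L with
  | nil => exact fun u => ⟨u, fun i => List.prefix_refl _, by simp⟩
  | cons hd L ih =>
    intro u
    rcases ih u with ⟨v, hv1, hv2⟩
    by_cases hij : hd.1 = hd.2
    · refine ⟨v, hv1, ?_⟩
      intro p hp hne
      rcases List.mem_cons.1 hp with h | h
      · exact absurd (h ▸ hij) hne
      · exact hv2 p h hne
    · rcases refine_pair hWo hWd (v hd.1) (v hd.2) with ⟨a, b, ha, hb, hab⟩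
      set v' := Function.update (Function.update v hd.1 a) hd.2 b with hv'
      have hshrink : ∀ k, cyl (v' k) ⊆ cyl (v k) := by
        intro k
        rcases eq_or_ne k hd.2 with rfl | h2
        · rw [hv', Function.update_self]; exact cyl_anti hb
        rcases eq_or_ne k hd.1 with rfl | h1
        · rw [hv', Function.update_of_ne h2, Function.update_self]; exact cyl_anti ha
        · rw [hv', Function.update_of_ne h2, Function.update_of_ne h1]
      have hpre : ∀ k, v k <+: v' k := by
        intro k
        rcases eq_or_ne k hd.2 with rfl | h2
        · rw [hv', Function.update_self]; exact hb
        rcases eq_or_ne k hd.1 with rfl | h1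
        · rw [hv', Function.update_of_ne h2, Function.update_self]; exact ha
        · rw [hv', Function.update_of_ne h2, Function.update_of_ne h1]
      refine ⟨v', fun i => (hv1 i).trans (hpre i), ?_⟩
      intro p hp hne
      rcases List.mem_cons.1 hp with h | h
      · subst h
        have h1 : v' p.1 = a := by rw [hv', Function.update_of_ne hij, Function.update_self]
        have h2 : v' p.2 = b := by rw [hv', Function.update_self]
        rw [h1, h2]; exact hab
      · exact (prod_mono (hshrink p.1) (hshrink p.2)).trans (hv2 p h hne)


section Mycielski
variable (D1 : ℕ → Set Cantor) (D2 : ℕ → Set (Cantor × Cantor))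

/-- invariant at stage `n` of the fusion construction -/
structure Inv (n : ℕ) (c : Cantor → List Bool) : Prop where
  dep : ∀ x y : Cantor, (∀ i < n, x i = y i) → c x = c y
  len : ∀ x, n ≤ (c x).length
  inD1 : ∀ m, n = m + 1 → ∀ x, cyl (c x) ⊆ D1 m
  inD2 : ∀ x y, (∃ i < n, x i ≠ y i) → ∀ m < n, cyl (c x) ×ˢ cyl (c y) ⊆ D2 m
  disj : ∀ x y, (∃ i < n, x i ≠ y i) → Disjoint (cyl (c x)) (cyl (c y))

variable (hD1o : ∀ n, IsOpen (D1 n)) (hD1d : ∀ n, Dense (D1 n))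
  (hD2o : ∀ n, IsOpen (D2 n)) (hD2d : ∀ n, Dense (D2 n))
include hD1o hD1d hD2o hD2d

lemma step {n : ℕ} {c : Cantor → List Bool} (hc : Inv D1 D2 n c) :
    ∃ c', Inv D1 D2 (n + 1) c' ∧ ∀ x, c x <+: c' x := by
  classical
  set ι := Fin (n + 1) → Bool with hι
  set emb : ι → Cantor := fun s i => if h : i < n + 1 then s ⟨i, h⟩ else false with hemb
  set res : Cantor → ι := fun x i => x i with hres
  have hres_emb : ∀ x : Cantor, ∀ i < n + 1, emb (res x) i = x i := by
    intro x i hi; simp [hemb, hres, hi, Nat.lt_succ_iff.mp hi]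
  set u0 : Cantor → List Bool := fun x => c x ++ [x n] with hu0
  have hu0res : ∀ x, u0 (emb (res x)) = u0 x := by
    intro x
    have h1 : c (emb (res x)) = c x :=
      hc.dep _ _ fun i hi => hres_emb x i (Nat.lt_succ_of_lt hi)
    have h2 : (emb (res x)) n = x n := hres_emb x n (Nat.lt_succ_self n)
    simp [hu0, h1, h2]
  -- the dense open target for pairs
  set W : Set (Cantor × Cantor) := ⋂ m ∈ Finset.range (n + 1), D2 m with hW
  have hWr : W ∈ residual (Cantor × Cantor) := by
    rw [hW]
    exact (Filter.biInter_finset_mem _).2 fun m _ => residual_of_dense_open (hD2o m) (hD2d m)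
  have hWo : IsOpen W := isOpen_biInter_finset fun m _ => hD2o m
  have hWd : Dense W := dense_of_mem_residual hWr
  -- pass 1 : go into D1 n
  choose v1 hv1p hv1D using fun s : ι => refine_into (hD1o n) (hD1d n) (u0 (emb s))
  -- pass 2 : all distinct pairs into W
  obtain ⟨v2, hv2p, hv2W⟩ := refine_pairs hWo hWd ((Finset.univ : Finset (ι × ι)).toList) v1
  have hv2W' : ∀ s t : ι, s ≠ t → cyl (v2 s) ×ˢ cyl (v2 t) ⊆ W := fun s t hst =>
    hv2W (s, t) (Finset.mem_toList.2 (Finset.mem_univ _)) hst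
  refine ⟨fun x => v2 (res x), ?_, ?_⟩
  · constructor
    · intro x y h
      have : res x = res y := funext fun i => h i i.2
      rw [this]
    · intro x
      have h1 : u0 (emb (res x)) <+: v2 (res x) := (hv1p _).trans (hv2p _)
      have h2 := h1.length_le
      rw [hu0res] at h2
      have h3 : (u0 x).length = (c x).length + 1 := by simp [hu0]
      have h4 := hc.len x
      omega
    · rintro m hm x
      obtain rfl : m = n := by omega
      refine Subset.trans (cyl_anti (hv2p (res x))) (hv1D (res x))
    · intro x y hxy m hm
      have hst : res x ≠ res y := by
        rcases hxy with ⟨i, hi, hne⟩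
        intro h
        exact hne (congrFun h ⟨i, hi⟩)
      refine Subset.trans (hv2W' _ _ hst) ?_
      intro p hp
      rw [hW] at hp
      exact Set.mem_iInter₂.1 hp m (Finset.mem_range.2 hm)
    · intro x y hxy
      by_cases h : ∃ i < n, x i ≠ y i
      · have hd := hc.disj x y h
        have hx : cyl (v2 (res x)) ⊆ cyl (c x) := by
          refine Subset.trans (cyl_anti ((hv1p _).trans (hv2p _))) ?_
          rw [hu0res]
          exact cyl_anti ⟨[x n], rfl⟩
        have hy : cyl (v2 (res y)) ⊆ cyl (c y) := by
          refine Subset.trans (cyl_anti ((hv1p _).trans (hv2p _))) ?_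
          rw [hu0res]
          exact cyl_anti ⟨[y n], rfl⟩
        exact hd.mono hx hy
      · -- x and y agree below n and differ at n
        push_neg at h
        have hxyn : x n ≠ y n := by
          rcases hxy with ⟨i, hi, hne⟩
          rcases Nat.lt_succ_iff_lt_or_eq.1 hi with hi' | rfl
          · exact absurd (h i hi') hne
          · exact hne
        have hcxy : c x = c y := hc.dep x y h
        have hdis : Disjoint (cyl (u0 x)) (cyl (u0 y)) := by
          refine cyl_disjoint (i := (c x).length) (by simp [hu0]) (by simp [hu0, hcxy]) ?_
          have h1 : (u0 x)[(c x).length]'(by simp [hu0]) = x n := by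
            simp [hu0]
          have h2 : (u0 y)[(c x).length]'(by simp [hu0, hcxy]) = y n := by
            simp [hu0, hcxy]
          rw [h1, h2]
          exact hxyn
        have hx : cyl (v2 (res x)) ⊆ cyl (u0 x) := by
          rw [← hu0res]; exact cyl_anti ((hv1p _).trans (hv2p _))
        have hy : cyl (v2 (res y)) ⊆ cyl (u0 y) := by
          rw [← hu0res]; exact cyl_anti ((hv1p _).trans (hv2p _))
        exact hdis.mono hx hy
  · intro x
    have h1 : u0 (emb (res x)) <+: v2 (res x) := (hv1p _).trans (hv2p _)
    rw [hu0res] at h1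
    exact (List.prefix_append _ _).trans h1

lemma exists_chain : ∃ l : ℕ → Cantor → List Bool,
    (∀ n, Inv D1 D2 n (l n)) ∧ ∀ n x, l n x <+: l (n + 1) x := by
  have h0 : Inv D1 D2 0 fun _ => [] := by
    refine ⟨fun _ _ _ => rfl, fun _ => Nat.zero_le _, fun m hm => by omega, ?_, ?_⟩ <;>
      · rintro x y ⟨i, hi, -⟩; omega
  choose stp hstp1 hstp2 using fun (n : ℕ) (c : Cantor → List Bool) (h : Inv D1 D2 n c) =>
    step D1 D2 hD1o hD1d hD2o hD2d h
  let F : ∀ n : ℕ, {c : Cantor → List Bool // Inv D1 D2 n c} := fun n =>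
    Nat.rec ⟨fun _ => [], h0⟩ (fun n p => ⟨stp n p.1 p.2, hstp1 n p.1 p.2⟩) n
  exact ⟨fun n => (F n).1, fun n => (F n).2, fun n x => hstp2 n (F n).1 (F n).2 x⟩

lemma mycielski : ∃ f : Cantor → Cantor, Continuous f ∧ Function.Injective f ∧
    (∀ x n, f x ∈ D1 n) ∧ ∀ x y : Cantor, x ≠ y → ∀ n, (f x, f y) ∈ D2 n := by
  obtain ⟨l, hInv, hchain⟩ := exists_chain D1 D2 hD1o hD1d hD2o hD2d
  have hchain' : ∀ x : Cantor, ∀ {n m : ℕ}, n ≤ m → l n x <+: l m x := by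
    intro x n m h
    induction m with
    | zero => rw [Nat.le_zero.1 h]
    | succ m ih =>
      rcases eq_or_lt_of_le h with rfl | h'
      · exact List.prefix_refl _
      · exact (ih (Nat.lt_succ_iff.1 h')).trans (hchain m x)
  set f : Cantor → Cantor := fun x j => (l (j + 1) x).getD j false with hf
  have hflen : ∀ n x, n ≤ (l n x).length := fun n x => (hInv n).len x
  have hfval : ∀ (x : Cantor) (n i : ℕ) (hi : i < (l n x).length), f x i = (l n x)[i] := by
    intro x n i hi
    set N := max n (i + 1) with hN
    have h1 : l n x <+: l N x := hchain' x (le_max_left _ _)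
    have h2 : l (i + 1) x <+: l N x := hchain' x (le_max_right _ _)
    have hi2 : i < (l (i + 1) x).length := lt_of_lt_of_le (Nat.lt_succ_self i) (hflen (i + 1) x)
    have e1 : f x i = (l (i + 1) x)[i] := List.getD_eq_getElem _ _ hi2
    rw [e1]
    exact (h2.getElem hi2).trans (h1.getElem hi).symm
  have hfmem : ∀ (x : Cantor) (n : ℕ), f x ∈ cyl (l n x) := by
    intro x n i hi
    exact hfval x n i hi
  refine ⟨f, ?_, ?_, ?_, ?_⟩
  · refine continuous_pi fun j => continuous_discrete_rng.2 fun b => ?_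
    refine isOpen_of_determined (n := j + 1) fun x y hxy hx => ?_
    have : l (j + 1) x = l (j + 1) y := (hInv (j + 1)).dep x y hxy
    simpa only [Set.mem_preimage, hf, this] using hx
  · intro x y hxy'
    by_contra hxy
    have : ∃ k, x k ≠ y k := by
      by_contra h
      push_neg at h
      exact hxy (funext h)
    obtain ⟨k, hk⟩ := this
    have hd : Disjoint (cyl (l (k + 1) x)) (cyl (l (k + 1) y)) :=
      (hInv (k + 1)).disj x y ⟨k, Nat.lt_succ_self k, hk⟩
    exact (Set.disjoint_left.1 hd) (hfmem x (k + 1)) (hxy' ▸ hfmem y (k + 1))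
  · intro x n
    exact (hInv (n + 1)).inD1 n rfl x (hfmem x (n + 1))
  · intro x y hxy n
    have : ∃ k, x k ≠ y k := by
      by_contra h
      push_neg at h
      exact hxy (funext h)
    obtain ⟨k, hk⟩ := this
    set N := max (n + 1) (k + 1) with hN
    have hsub := (hInv N).inD2 x y ⟨k, lt_of_lt_of_le (Nat.lt_succ_self k) (le_max_right _ _), hk⟩
      n (lt_of_lt_of_le (Nat.lt_succ_self n) (le_max_left _ _))
    exact hsub ⟨hfmem x N, hfmem y N⟩
end Mycielski

/-- a nowhere dense set is meagre -/
lemma nwd_meagre {α : Type*} [TopologicalSpace α] {s : Set α} (h : IsNowhereDense s) :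
    IsMeagre s :=
  isMeagre_iff_countable_union_isNowhereDense.2
    ⟨{closure s}, by simpa using h.closure, countable_singleton _, by simp [subset_closure]⟩

lemma meagre_union {α : Type*} [TopologicalSpace α] {s t : Set α} (hs : IsMeagre s)
    (ht : IsMeagre t) : IsMeagre (s ∪ t) := by
  rw [IsMeagre, compl_union]
  exact Filter.inter_mem hs ht

/-- extract a decreasing-free sequence of dense open sets from a residual set -/
lemma seq_of_residual {α : Type*} [TopologicalSpace α] {s : Set α} (hs : s ∈ residual α) :
    ∃ D : ℕ → Set α, (∀ n, IsOpen (D n)) ∧ (∀ n, Dense (D n)) ∧ (⋂ n, D n) ⊆ s := by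
  rcases mem_residual_iff.1 hs with ⟨S, hSo, hSd, hSc, hSs⟩
  rcases S.eq_empty_or_nonempty with rfl | hne
  · exact ⟨fun _ => univ, fun _ => isOpen_univ, fun _ => dense_univ, by simpa using hSs⟩
  · rcases hSc.exists_eq_range hne with ⟨D, rfl⟩
    refine ⟨D, fun n => hSo _ ⟨n, rfl⟩, fun n => hSd _ ⟨n, rfl⟩, ?_⟩
    refine Subset.trans ?_ hSs
    rintro x hx t ⟨n, rfl⟩
    exact mem_iInter.1 hx n

/-- Kuratowski-Ulam, easy direction, for the Cantor square: comeagerly many sections of a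
meagre set are meagre. -/
lemma sections_meagre {M : Set (Cantor × Cantor)} (hM : IsMeagre M) :
    ∃ T ∈ residual Cantor, ∀ x ∈ T, IsMeagre (Prod.mk x ⁻¹' M) := by
  obtain ⟨D, hDo, hDd, hDs⟩ := seq_of_residual hM
  set F : ℕ → Set (Cantor × Cantor) := fun n => (D n)ᶜ with hF
  have hFc : ∀ n, IsClosed (F n) := fun n => (hDo n).isClosed_compl
  have hMF : M ⊆ ⋃ n, F n := by
    intro p hp
    by_contra h
    simp only [hF, mem_iUnion, mem_compl_iff, not_exists, not_not] at h
    exact hDs (mem_iInter.2 h) hp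
  -- the bad set for a single closed set F n is meagre
  have key : ∀ n, IsMeagre {x : Cantor | ¬ IsNowhereDense (Prod.mk x ⁻¹' F n)} := by
    intro n
    set A : List Bool → Set Cantor := fun s => {x | ∀ y ∈ cyl s, (x, y) ∈ F n} with hA
    have hAm : ∀ s, IsMeagre (A s) := by
      intro s
      have hAc : IsClosed (A s) := by
        have : A s = ⋂ y ∈ cyl s, (fun x => (x, y)) ⁻¹' F n := by
          ext x; simp [hA]
        rw [this]
        exact isClosed_biInter fun y _ =>
          (hFc n).preimage (continuous_id.prodMk continuous_const)
      refine nwd_meagre (hAc.isNowhereDense_iff.2 ?_)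
      by_contra h
      rcases eq_empty_or_nonempty (interior (A s)) with h' | h'
      · exact h h'
      rcases h' with ⟨z, hz⟩
      rcases exists_cyl_subset isOpen_interior hz with ⟨m, hm⟩
      have hbox : cyl (listOf z m) ×ˢ cyl s ⊆ F n := by
        rintro ⟨x, y⟩ ⟨hx, hy⟩
        exact interior_subset (hm hx) y hy
      have hne : (cyl (listOf z m) ×ˢ cyl s).Nonempty := (cyl_nonempty _).prod (cyl_nonempty _)
      rcases (hDd n).inter_open_nonempty _ ((isOpen_cyl _).prod (isOpen_cyl _)) hne with
        ⟨p, hp1, hp2⟩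
      exact (hbox hp1) hp2
    have hsub : {x : Cantor | ¬ IsNowhereDense (Prod.mk x ⁻¹' F n)} ⊆ ⋃ s : List Bool, A s := by
      intro x hx
      have hxc : IsClosed (Prod.mk x ⁻¹' F n) := (hFc n).preimage (Continuous.prodMk_right x)
      rw [mem_setOf_eq, hxc.isNowhereDense_iff] at hx
      rcases eq_empty_or_nonempty (interior (Prod.mk x ⁻¹' F n)) with h' | h'
      · exact absurd h' hx
      rcases h' with ⟨z, hz⟩
      rcases exists_cyl_subset isOpen_interior hz with ⟨m, hm⟩
      exact mem_iUnion.2 ⟨listOf z m, fun y hy => (interior_subset (hm hy) : _)⟩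
    rw [IsMeagre]
    have : (⋃ s : List Bool, A s)ᶜ ∈ residual Cantor := by
      rw [compl_iUnion]
      exact (countable_iInter_mem).2 fun s => (hAm s)
    exact Filter.mem_of_superset this (compl_subset_compl.2 hsub)
  refine ⟨(⋃ n, {x : Cantor | ¬ IsNowhereDense (Prod.mk x ⁻¹' F n)})ᶜ, ?_, ?_⟩
  · rw [compl_iUnion]
    exact (countable_iInter_mem).2 fun n => key n
  · intro x hx
    simp only [mem_compl_iff, mem_iUnion, not_exists, mem_setOf_eq, not_not] at hx
    have : Prod.mk x ⁻¹' M ⊆ ⋃ n, Prod.mk x ⁻¹' F n := fun y hy => by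
      rcases mem_iUnion.1 (hMF hy) with ⟨n, hn⟩
      exact mem_iUnion.2 ⟨n, hn⟩
    exact (isMeagre_iUnion fun n => nwd_meagre (hx n)).mono this

/-- Kuratowski–Ulam / Fubini for category: a Baire measurable set in the Cantor square all of
whose vertical sections are meagre is meagre. -/
lemma meagre_of_sections {S : Set (Cantor × Cantor)} (hS : BaireMeasurableSet S)
    (h : ∀ x, IsMeagre (Prod.mk x ⁻¹' S)) : IsMeagre S := by
  obtain ⟨u, huo, hue⟩ := hS.residualEq_isOpen
  set M : Set (Cantor × Cantor) := {p | (p ∈ S) = (p ∈ u)}ᶜ with hM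
  have hMm : IsMeagre M := by
    rw [IsMeagre, hM, compl_compl]
    exact hue
  have hu : u = ∅ := by
    by_contra hne
    rcases nonempty_iff_ne_empty.2 hne with ⟨z, hz⟩
    rcases isOpen_prod_iff.1 huo z.1 z.2 hz with ⟨u₁, u₂, h1, h2, hz1, hz2, hsub⟩
    rcases exists_cyl_subset h1 hz1 with ⟨n, hn⟩
    rcases exists_cyl_subset h2 hz2 with ⟨m, hm⟩
    have hbox : cyl (listOf z.1 n) ×ˢ cyl (listOf z.2 m) ⊆ u := fun p hp =>
      hsub ⟨hn hp.1, hm hp.2⟩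
    obtain ⟨T, hT, hTm⟩ := sections_meagre hMm
    obtain ⟨x, hxT, hxa⟩ :=
      (dense_of_mem_residual hT).exists_mem_open (isOpen_cyl _) (cyl_nonempty (listOf z.1 n))
    have hsec : cyl (listOf z.2 m) ⊆ (Prod.mk x ⁻¹' S) ∪ (Prod.mk x ⁻¹' M) := by
      intro y hy
      have hyu : (x, y) ∈ u := hbox ⟨hxa, hy⟩
      by_cases hyS : (x, y) ∈ S
      · exact Or.inl hyS
      · refine Or.inr ?_
        simp only [hM, mem_compl_iff, mem_setOf_eq, mem_preimage]
        intro he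
        exact hyS (he ▸ hyu)
    have hmeag : IsMeagre (cyl (listOf z.2 m)) :=
      (meagre_union (h x) (hTm x hxT)).mono hsec
    have hdense : Dense (cyl (listOf z.2 m))ᶜ := dense_of_mem_residual hmeag
    rcases hdense.inter_open_nonempty _ (isOpen_cyl _) (cyl_nonempty _) with ⟨y, hy1, hy2⟩
    exact hy2 hy1
  refine hMm.mono fun p hp => ?_
  simp only [hM, mem_compl_iff, mem_setOf_eq]
  intro he
  have : p ∈ u := he ▸ hp
  rw [hu] at this
  exact this

/-- Baire measurable maps are continuous after restricting to a comeagre set. -/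
lemma baire_cont {X : Type*} [TopologicalSpace X] [SecondCountableTopology X]
    (φ : Cantor → X) (hφ : ∀ U : Set X, IsOpen U → BaireMeasurableSet (φ ⁻¹' U)) :
    ∃ Cs ∈ residual Cantor, ∀ f : Cantor → Cantor, Continuous f → (∀ x, f x ∈ Cs) →
      Continuous (φ ∘ f) := by
  classical
  set B := TopologicalSpace.countableBasis X with hB
  choose U hUo hUe using fun (V : Set X) (hV : V ∈ B) =>
    (hφ V (TopologicalSpace.isOpen_of_mem_countableBasis hV)).residualEq_isOpen
  set Cs : Set Cantor := ⋂ V ∈ B, ⋂ (hV : V ∈ B), {x | (x ∈ φ ⁻¹' V) = (x ∈ U V hV)} with hCs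
  have hCr : Cs ∈ residual Cantor := by
    rw [hCs]
    refine (countable_bInter_mem (TopologicalSpace.countable_countableBasis X)).2 fun V hV => ?_
    exact countable_iInter_mem.2 fun hV' => hUe V hV'
  refine ⟨Cs, hCr, fun f hf hrange => ?_⟩
  refine (TopologicalSpace.isBasis_countableBasis X).continuous_iff.2 fun V hV => ?_
  have : (φ ∘ f) ⁻¹' V = f ⁻¹' (U V hV) := by
    ext x
    have hx : (f x ∈ φ ⁻¹' V) = (f x ∈ U V hV) := by
      have := hrange x
      rw [hCs] at this
      exact mem_iInter.1 (mem_iInter.1 (mem_iInter.1 this V) hV) hV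
    simp only [mem_preimage, Function.comp_apply]
    rw [← hx]
    exact Iff.rfl
  rw [this]
  exact (hUo V hV).preimage hf

/-- the set of pairs with equal `φ`-values is Baire measurable -/
lemma eqset_baire {X : Type*} [TopologicalSpace X] [PolishSpace X]
    (φ : Cantor → X) (hφ : ∀ U : Set X, IsOpen U → BaireMeasurableSet (φ ⁻¹' U)) :
    BaireMeasurableSet {p : Cantor × Cantor | φ p.1 = φ p.2} := by
  classical
  letI := TopologicalSpace.upgradeIsCompletelyMetrizable X
  -- preimages of open sets of X × X under φ × φ are Baire measurable
  have main : ∀ O : Set (X × X), IsOpen O →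
      BaireMeasurableSet {p : Cantor × Cantor | (φ p.1, φ p.2) ∈ O} := by
    intro O hO
    set B := TopologicalSpace.countableBasis X with hB
    set S : Set (Set X × Set X) :=
      {r | r.1 ∈ B ∧ r.2 ∈ B ∧ r.1 ×ˢ r.2 ⊆ O} with hS
    have hSc : S.Countable := by
      have : S ⊆ B ×ˢ B := fun r hr => ⟨hr.1, hr.2.1⟩
      exact Countable.mono this
        ((TopologicalSpace.countable_countableBasis X).prod
          (TopologicalSpace.countable_countableBasis X))
    have hdecomp : {p : Cantor × Cantor | (φ p.1, φ p.2) ∈ O} =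
        ⋃ r ∈ S, (Prod.fst ⁻¹' (φ ⁻¹' r.1) ∩ Prod.snd ⁻¹' (φ ⁻¹' r.2)) := by
      ext p
      simp only [mem_setOf_eq, mem_iUnion, mem_inter_iff, mem_preimage]
      constructor
      · intro hp
        rcases isOpen_prod_iff.1 hO (φ p.1) (φ p.2) hp with ⟨v, w, hv, hw, h1, h2, hsub⟩
        rcases (TopologicalSpace.isBasis_countableBasis X).exists_subset_of_mem_open h1 hv
          with ⟨v', hv', hv'1, hv'2⟩
        rcases (TopologicalSpace.isBasis_countableBasis X).exists_subset_of_mem_open h2 hw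
          with ⟨w', hw', hw'1, hw'2⟩
        refine ⟨(v', w'), ⟨hv', hw', ?_⟩, hv'1, hw'1⟩
        exact (prod_mono hv'2 hw'2).trans hsub
      · rintro ⟨r, hrS, h1, h2⟩
        exact hrS.2.2 ⟨h1, h2⟩
    rw [hdecomp]
    refine BaireMeasurableSet.biUnion hSc fun r hr => ?_
    refine BaireMeasurableSet.inter ?_ ?_
    · exact (hφ r.1 (TopologicalSpace.isOpen_of_mem_countableBasis hr.1)).preimage
        continuous_fst isOpenMap_fst
    · exact (hφ r.2 (TopologicalSpace.isOpen_of_mem_countableBasis hr.2.1)).preimage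
        continuous_snd isOpenMap_snd
  have hdiag : IsClosed (Set.diagonal X) := isClosed_diagonal
  rcases hdiag.isGδ with ⟨T, hTo, hTc, hTeq⟩
  have : {p : Cantor × Cantor | φ p.1 = φ p.2} =
      ⋂ t ∈ T, {p : Cantor × Cantor | (φ p.1, φ p.2) ∈ t} := by
    ext p
    simp only [mem_setOf_eq, mem_iInter]
    constructor
    · intro hp t ht
      have : (φ p.1, φ p.2) ∈ Set.diagonal X := hp
      rw [hTeq] at this
      exact this t ht
    · intro hp
      have : (φ p.1, φ p.2) ∈ ⋂₀ T := fun t ht => hp t ht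
      rw [← hTeq] at this
      exact this
  rw [this]
  exact BaireMeasurableSet.biInter hTc fun t ht => main t (hTo t ht)

end Statement0Aux

open Statement0Aux in
/-- From a meager-to-one Baire measurable `φ : 2^ℕ → X` with comeager
`φ⁻¹(A)` and meager `(φ × φ)⁻¹(G)`, one obtains a continuous injection of Cantor
space into `A` with `G`-independent image. -/
theorem statement0 {X : Type*} [TopologicalSpace X] [PolishSpace X]
    (A : Set X) (G : X → X → Prop)
    (hGirr : ∀ x, ¬ G x x) (hGsym : ∀ x y, G x y → G y x)
    (φ : (ℕ → Bool) → X)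
    (hφBaire : ∀ U : Set X, IsOpen U → BaireMeasurableSet (φ ⁻¹' U))
    (hφmeager : ∀ x : X, IsMeagre (φ ⁻¹' {x}))
    (hA : φ ⁻¹' A ∈ residual (ℕ → Bool))
    (hG : IsMeagre {p : (ℕ → Bool) × (ℕ → Bool) | G (φ p.1) (φ p.2)}) :
    ∃ π : (ℕ → Bool) → X, Continuous π ∧ Function.Injective π ∧
      Set.range π ⊆ A ∧ ∀ x y : ℕ → Bool, ¬ G (π x) (π y) := by
  classical
  obtain ⟨Cs, hCr, hCont⟩ := baire_cont φ hφBaire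
  set E : Set (Cantor × Cantor) :=
    {p : Cantor × Cantor | p.1 ≠ p.2} ∩ {p : Cantor × Cantor | φ p.1 = φ p.2} with hE
  have hEbm : BaireMeasurableSet E := by
    refine BaireMeasurableSet.inter ?_ (eqset_baire φ hφBaire)
    have hcl : IsOpen (Set.diagonal Cantor)ᶜ := (isClosed_diagonal (X := Cantor)).isOpen_compl
    have heq : {p : Cantor × Cantor | p.1 ≠ p.2} = (Set.diagonal Cantor)ᶜ := by
      ext p; simp [Set.diagonal]
    exact (heq ▸ hcl).baireMeasurableSet
  have hEsec : ∀ x : Cantor, IsMeagre (Prod.mk x ⁻¹' E) := by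
    intro x
    refine (hφmeager (φ x)).mono ?_
    rintro y ⟨-, hy⟩
    exact (hy : φ x = φ y).symm
  have hEm : IsMeagre E := meagre_of_sections hEbm hEsec
  have hRm : IsMeagre (E ∪ {p : Cantor × Cantor | G (φ p.1) (φ p.2)}) := meagre_union hEm hG
  obtain ⟨D1, hD1o, hD1d, hD1s⟩ := seq_of_residual (Filter.inter_mem hCr hA)
  obtain ⟨D2, hD2o, hD2d, hD2s⟩ := seq_of_residual hRm
  obtain ⟨f, hfc, hfi, hfD1, hfD2⟩ := mycielski D1 D2 hD1o hD1d hD2o hD2d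
  have hrange : ∀ x, f x ∈ Cs ∩ φ ⁻¹' A := fun x => hD1s (mem_iInter.2 (hfD1 x))
  have hkey : ∀ x y : Cantor, x ≠ y → ¬ G (φ (f x)) (φ (f y)) ∧ φ (f x) ≠ φ (f y) := by
    intro x y hxy
    have hp : (f x, f y) ∉ E ∪ {p : Cantor × Cantor | G (φ p.1) (φ p.2)} :=
      hD2s (mem_iInter.2 (hfD2 x y hxy))
    rw [mem_union, not_or] at hp
    refine ⟨hp.2, fun he => ?_⟩
    exact hp.1 ⟨fun h => hxy (hfi h), he⟩
  refine ⟨φ ∘ f, hCont f hfc fun x => (hrange x).1, ?_, ?_, ?_⟩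
  · intro x y h
    by_contra hxy
    exact (hkey x y hxy).2 h
  · rintro - ⟨x, rfl⟩
    exact (hrange x).2
  · intro x y
    rcases eq_or_ne x y with rfl | hxy
    · intro h
      exact hGirr _ h
    · exact (hkey x y hxy).1
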